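/- arXiv:0908.3298 — 2 statements merged into one kernel-verified Lean document; each statement's English description precedes it below -/
import Mathlib

section
/- Let f(u) be a formal power series over a commutative Q-algebra A with f(0)=0 and f'(0)=1, such that 1/f(u) + 1/f(-u) = c for some constant c ∈ A (as an identity of formal Laurent series). Then there exists a formal power series q(t) with q(0)=1 such that f(u) = u/(q(u²) + c·u/2). -/
open PowerSeries

/-- Composition (substitution) of formal power series: `psComp1 f g = f(g(u))`.
It is the standard composition whenever `g` has zero constant term. -/
noncomputable def psComp1 {A : Type*} [CommSemiring A] (f g : PowerSeries A) : PowerSeries A :=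
  PowerSeries.mk fun n =>
    ∑ k ∈ Finset.range (n + 1), PowerSeries.coeff k f * PowerSeries.coeff n (g ^ k)

/-- If `f(0) = 0`, `f'(0) = 1` and `1/f(u) + 1/f(-u) = c` (equivalently, in cleared form,
`f(-u) + f(u) = c·f(u)·f(-u)`), then there is a power series `q` with `q(0) = 1` such that
`f(u) = u/(q(u²) + c·u/2)`, i.e. `f(u)·(q(u²) + (c/2)·u) = u`. -/
theorem stmt_1 {A : Type*} [CommRing A] [Algebra ℚ A] (f : PowerSeries A) (c : A)
    (h0 : PowerSeries.constantCoeff f = 0) (h1 : PowerSeries.coeff 1 f = 1)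
    (hc : PowerSeries.rescale (-1) f + f
        = PowerSeries.C c * (f * PowerSeries.rescale (-1) f)) :
    ∃ q : PowerSeries A, PowerSeries.constantCoeff q = 1 ∧
      f * (psComp1 q (PowerSeries.X ^ 2)
            + PowerSeries.C ((1 / 2 : ℚ) • c) * PowerSeries.X) = PowerSeries.X := by
  classical
  set v : PowerSeries A := PowerSeries.mk fun n => PowerSeries.coeff (n+1) f with hv
  have hfv : f = X * v := by
    ext n
    cases n with
    | zero => simpa [hv] using h0
    | succ n => simp [hv, PowerSeries.coeff_succ_X_mul]
  have hv0 : PowerSeries.constantCoeff v = 1 := by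
    simpa [hv] using h1
  set w : PowerSeries A := PowerSeries.invOfUnit v 1 with hw
  have hvw : v * w = 1 := PowerSeries.mul_invOfUnit v 1 (by simp [hv0])
  have hfw : f * w = X := by rw [hfv, mul_assoc, hvw, mul_one]
  have hrX : PowerSeries.rescale (-1 : A) X = -X := by
    ext n
    rcases eq_or_ne n 1 with rfl | h
    · simp [PowerSeries.coeff_rescale]
    · simp [PowerSeries.coeff_rescale, PowerSeries.coeff_X, h]
  set w' := PowerSeries.rescale (-1 : A) w with hw'
  have hfw' : PowerSeries.rescale (-1) f * w' = -X := by
    rw [hw', ← map_mul, hfw, hrX]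
  have hXcancel : ∀ a b : PowerSeries A, X * a = X * b → a = b := by
    intro a b h
    ext n
    have := congrArg (PowerSeries.coeff (n+1)) h
    simpa [PowerSeries.coeff_succ_X_mul] using this
  have e : X * w' + (-X) * w = PowerSeries.C c * (X * -X) := by
    calc X * w' + (-X) * w
        = (f * w) * w' + (PowerSeries.rescale (-1) f * w') * w := by rw [hfw, hfw']
      _ = (PowerSeries.rescale (-1) f + f) * (w * w') := by ring
      _ = PowerSeries.C c * (f * PowerSeries.rescale (-1) f) * (w * w') := by rw [hc]
      _ = PowerSeries.C c * ((f * w) * (PowerSeries.rescale (-1) f * w')) := by ring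
      _ = PowerSeries.C c * (X * -X) := by rw [hfw, hfw']
  have hkey : w - w' = PowerSeries.C c * X := by
    apply hXcancel
    linear_combination -e
  have hcoeff : ∀ n : ℕ, PowerSeries.coeff n w - (-1:A)^n * PowerSeries.coeff n w
      = if n = 1 then c else 0 := by
    intro n
    have := congrArg (PowerSeries.coeff n) hkey
    simpa [hw', PowerSeries.coeff_rescale, PowerSeries.coeff_X, mul_ite] using this
  have hodd : ∀ n : ℕ, Odd n → n ≠ 1 → PowerSeries.coeff n w = 0 := by
    intro n hn hn1
    have h := hcoeff n
    rw [Odd.neg_one_pow hn, if_neg hn1] at h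
    have h2 : (2:ℚ) • PowerSeries.coeff n w = 0 := by
      rw [two_smul]; linear_combination h
    have := congrArg (fun x => (1/2:ℚ) • x) h2
    simpa [smul_smul] using this
  have hone : PowerSeries.coeff 1 w = (1/2:ℚ) • c := by
    have h := hcoeff 1
    simp at h
    have h2 : (2:ℚ) • PowerSeries.coeff 1 w = c := by
      rw [two_smul]; linear_combination h
    have := congrArg (fun x => (1/2:ℚ) • x) h2
    simpa [smul_smul] using this
  set q : PowerSeries A := PowerSeries.mk fun n => PowerSeries.coeff (2*n) w with hq
  have hw0 : PowerSeries.constantCoeff w = 1 := by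
    have := congrArg (PowerSeries.constantCoeff) hvw
    simp [hv0] at this
    simpa using this
  refine ⟨q, ?_, ?_⟩
  · simpa [hq] using hw0
  · have hcompcoeff : ∀ n : ℕ, PowerSeries.coeff n (psComp1 q (X^2))
        = if Even n then PowerSeries.coeff n w else 0 := by
      intro n
      rw [psComp1, PowerSeries.coeff_mk]
      have : ∀ k : ℕ, PowerSeries.coeff n (((X:PowerSeries A)^2) ^ k)
          = if n = 2*k then 1 else 0 := by
        intro k
        rw [← pow_mul, PowerSeries.coeff_X_pow]
      simp_rw [this, mul_ite, mul_one, mul_zero]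
      rcases Nat.even_or_odd n with ⟨m, rfl⟩ | ⟨m, rfl⟩
      · rw [if_pos ⟨m, rfl⟩]
        rw [Finset.sum_eq_single m]
        · simp [hq, two_mul]
        · intro k hk hkm
          rw [if_neg (by omega)]
        · intro h
          exact absurd (Finset.mem_range.mpr (by omega)) h
      · rw [if_neg (by rw [Nat.even_iff]; omega)]
        apply Finset.sum_eq_zero
        intro k hk
        rw [if_neg (by omega)]
    have hsum : psComp1 q (X^2) + PowerSeries.C ((1 / 2 : ℚ) • c) * X = w := by
      ext n
      rw [map_add, hcompcoeff]
      rcases Nat.even_or_odd n with he | ho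
      · rw [if_pos he]
        have : n ≠ 1 := by rintro rfl; exact (Nat.not_even_iff_odd.mpr (by decide)) he
        simp [PowerSeries.coeff_X, this]
      · rw [if_neg (Nat.not_even_iff_odd.mpr ho)]
        rcases eq_or_ne n 1 with rfl | hn1
        · simp [PowerSeries.coeff_X, hone]
        · simp [PowerSeries.coeff_X, hn1, hodd n ho hn1]
    rw [hsum, hfw]
end

section
/- Let f be a formal power series over a commutative Q-algebra A with f(0)=0, f'(0)=1, satisfying both functional equations: (i) 1/(f(u₁)f(u₂)) - 1/(f(u₁)f(u₁+u₂)) + 1/(f(-u₂)f(u₁+u₂)) = c, and (ii) the same equation with u₁ and u₂ interchanged, for some constant c. Then 1/f(u) + 1/f(-u) is a constant c' ∈ A. -/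
open MvPowerSeries

/-- Substitution of a multivariate power series `g` (with zero constant term) into a
one-variable power series `f`: `psCompMv f g = f(g)`. -/
noncomputable def psCompMv {A : Type*} [CommSemiring A] {σ : Type*}
    (f : PowerSeries A) (g : MvPowerSeries σ A) : MvPowerSeries σ A :=
  fun m => ∑ k ∈ Finset.range (Finsupp.sum m (fun _ e => e) + 1),
    PowerSeries.coeff k f * MvPowerSeries.coeff m (g ^ k)

section Aux

variable {A : Type*} [CommRing A]

lemma psCompMv_coeff_eq (f : PowerSeries A) (g : MvPowerSeries (Fin 2) A) (m : Fin 2 →₀ ℕ) :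
    MvPowerSeries.coeff m (psCompMv f g)
      = ∑ k ∈ Finset.range (Finsupp.sum m (fun _ e => e) + 1),
          PowerSeries.coeff k f * MvPowerSeries.coeff m (g ^ k) := rfl

lemma coeff_E (f : PowerSeries A) (i : Fin 2) (m : Fin 2 →₀ ℕ) :
    MvPowerSeries.coeff m (psCompMv f (X i))
      = if m = Finsupp.single i (m i) then PowerSeries.coeff (m i) f else 0 := by
  classical
  rw [psCompMv_coeff_eq]
  simp only [MvPowerSeries.coeff_X_pow, mul_ite, mul_one, mul_zero]
  by_cases h : m = Finsupp.single i (m i)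
  · rw [if_pos h]
    have hs : Finsupp.sum m (fun _ e => e) = m i := by
      conv_lhs => rw [h]
      exact Finsupp.sum_single_index rfl
    have hcond : ∀ k, (m = Finsupp.single i k) ↔ k = m i := by
      intro k
      constructor
      · intro hk
        have := DFunLike.congr_fun hk i
        simpa using this.symm
      · intro hk; rw [hk, ← h]
    simp only [hcond, hs]
    rw [Finset.sum_ite_eq' (Finset.range (m i + 1)) (m i) (fun k => PowerSeries.coeff k f)]
    rw [if_pos (Finset.mem_range.mpr (Nat.lt_succ_self _))]
  · rw [if_neg h]
    apply Finset.sum_eq_zero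
    intro k _
    rw [if_neg]
    intro hk
    exact h (by rw [hk]; simp)

lemma single_decomp {i : Fin 2} {n : ℕ} {m1 m2 : Fin 2 →₀ ℕ}
    (h : m1 + m2 = Finsupp.single i n) :
    m1 = Finsupp.single i (m1 i) ∧ m2 = Finsupp.single i (m2 i) := by
  have key : ∀ j, j ≠ i → m1 j = 0 ∧ m2 j = 0 := by
    intro j hj
    have h2 : m1 j + m2 j = 0 := by
      have := DFunLike.congr_fun h j
      simpa [Finsupp.single_eq_of_ne' (Ne.symm hj)] using this
    exact ⟨Nat.eq_zero_of_add_eq_zero_right h2, Nat.eq_zero_of_add_eq_zero_left h2⟩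
  constructor <;> (ext j; by_cases hj : j = i)
  · subst hj; simp
  · simp [Finsupp.single_eq_of_ne' (Ne.symm hj), (key j hj).1]
  · subst hj; simp
  · simp [Finsupp.single_eq_of_ne' (Ne.symm hj), (key j hj).2]

lemma psCompMv_mul_X (p q : PowerSeries A) (i : Fin 2) :
    psCompMv (p * q) (X i) = psCompMv p (X i) * psCompMv q (X i) := by
  classical
  apply MvPowerSeries.ext
  intro m
  rw [MvPowerSeries.coeff_mul]
  simp only [coeff_E]
  by_cases h : m = Finsupp.single i (m i)
  · rw [if_pos h, PowerSeries.coeff_mul]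
    refine (Finset.sum_nbij' (fun x => (x.1 i, x.2 i))
      (fun (y : ℕ × ℕ) => ((Finsupp.single i y.1 : Fin 2 →₀ ℕ),
        (Finsupp.single i y.2 : Fin 2 →₀ ℕ))) ?_ ?_ ?_ ?_ ?_).symm
    · intro x hx
      rw [Finset.HasAntidiagonal.mem_antidiagonal] at hx ⊢
      simpa using DFunLike.congr_fun hx i
    · intro y hy
      rw [Finset.HasAntidiagonal.mem_antidiagonal] at hy ⊢
      rw [← Finsupp.single_add, hy, ← h]
    · intro x hx
      rw [Finset.HasAntidiagonal.mem_antidiagonal] at hx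
      have hd := single_decomp (i := i) (n := m i) (hx.trans h)
      exact Prod.ext hd.1.symm hd.2.symm
    · intro y _
      simp
    · intro x hx
      rw [Finset.HasAntidiagonal.mem_antidiagonal] at hx
      have hd := single_decomp (i := i) (n := m i) (hx.trans h)
      rw [if_pos hd.1, if_pos hd.2]
  · rw [if_neg h]
    symm
    apply Finset.sum_eq_zero
    intro x hx
    rw [Finset.HasAntidiagonal.mem_antidiagonal] at hx
    by_cases h1 : x.1 = Finsupp.single i (x.1 i)
    · by_cases h2 : x.2 = Finsupp.single i (x.2 i)
      · exfalso
        apply h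
        have hm : m = Finsupp.single i (x.1 i + x.2 i) := by
          rw [← hx, Finsupp.single_add]
          rw [← h1, ← h2]
        rw [hm]; simp
      · rw [if_neg h2, mul_zero]
    · rw [if_neg h1, zero_mul]

lemma psCompMv_add (p q : PowerSeries A) (g : MvPowerSeries (Fin 2) A) :
    psCompMv (p + q) g = psCompMv p g + psCompMv q g := by
  funext m
  show (∑ k ∈ Finset.range (Finsupp.sum m (fun _ e => e) + 1),
      PowerSeries.coeff k (p + q) * MvPowerSeries.coeff m (g ^ k))
    = (∑ k ∈ Finset.range (Finsupp.sum m (fun _ e => e) + 1),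
      PowerSeries.coeff k p * MvPowerSeries.coeff m (g ^ k))
    + ∑ k ∈ Finset.range (Finsupp.sum m (fun _ e => e) + 1),
      PowerSeries.coeff k q * MvPowerSeries.coeff m (g ^ k)
  rw [← Finset.sum_add_distrib]
  apply Finset.sum_congr rfl
  intro k _
  rw [map_add, add_mul]

lemma psCompMv_neg_X (f : PowerSeries A) (i : Fin 2) :
    psCompMv f (-X i) = psCompMv (PowerSeries.rescale (-1) f) (X i) := by
  funext m
  show (∑ k ∈ Finset.range (Finsupp.sum m (fun _ e => e) + 1),
      PowerSeries.coeff k f * MvPowerSeries.coeff m ((-X i) ^ k))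
    = ∑ k ∈ Finset.range (Finsupp.sum m (fun _ e => e) + 1),
      PowerSeries.coeff k (PowerSeries.rescale (-1) f) * MvPowerSeries.coeff m ((X i) ^ k)
  apply Finset.sum_congr rfl
  intro k _
  rw [PowerSeries.coeff_rescale]
  have hneg : (-X i : MvPowerSeries (Fin 2) A) ^ k
      = MvPowerSeries.C (σ := Fin 2) ((-1 : A) ^ k) * (X i) ^ k := by
    rw [neg_pow, map_pow, map_neg, map_one]
  rw [hneg, MvPowerSeries.coeff_C_mul]
  ring

lemma coeff_mixed (p q : PowerSeries A) (a b : ℕ) :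
    MvPowerSeries.coeff (Finsupp.single (0 : Fin 2) a + Finsupp.single (1 : Fin 2) b)
      (psCompMv p (X (0 : Fin 2)) * psCompMv q (X (1 : Fin 2)))
      = PowerSeries.coeff a p * PowerSeries.coeff b q := by
  classical
  have h0' : ∀ x ∈ Finset.HasAntidiagonal.antidiagonal
      (Finsupp.single (0 : Fin 2) a + Finsupp.single (1 : Fin 2) b),
      x ≠ ((Finsupp.single (0 : Fin 2) a), (Finsupp.single (1 : Fin 2) b)) →
      MvPowerSeries.coeff x.1 (psCompMv p (X (0 : Fin 2)))
        * MvPowerSeries.coeff x.2 (psCompMv q (X (1 : Fin 2))) = 0 := by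
    intro x hx hne
    rw [Finset.HasAntidiagonal.mem_antidiagonal] at hx
    simp only [coeff_E]
    by_cases h1 : x.1 = Finsupp.single 0 (x.1 0)
    · by_cases h2 : x.2 = Finsupp.single 1 (x.2 1)
      · exfalso
        apply hne
        have e0 := DFunLike.congr_fun hx 0
        have e1 := DFunLike.congr_fun hx 1
        have hx20 : x.2 0 = 0 := by
          rw [h2]; exact Finsupp.single_eq_of_ne' (by decide)
        have hx11 : x.1 1 = 0 := by
          rw [h1]; exact Finsupp.single_eq_of_ne' (by decide)
        have ha : x.1 0 = a := by
          simpa [hx20, Finsupp.single_eq_of_ne' (show (1:Fin 2) ≠ 0 by decide)] using e0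
        have hb : x.2 1 = b := by
          simpa [hx11, Finsupp.single_eq_of_ne' (show (0:Fin 2) ≠ 1 by decide)] using e1
        exact Prod.ext (by rw [h1, ha]) (by rw [h2, hb])
      · rw [if_neg h2, mul_zero]
    · rw [if_neg h1, zero_mul]
  have h1' : ((Finsupp.single (0 : Fin 2) a), (Finsupp.single (1 : Fin 2) b)) ∉
      Finset.HasAntidiagonal.antidiagonal (Finsupp.single (0 : Fin 2) a + Finsupp.single (1 : Fin 2) b) →
      MvPowerSeries.coeff (Finsupp.single (0 : Fin 2) a) (psCompMv p (X (0 : Fin 2)))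
        * MvPowerSeries.coeff (Finsupp.single (1 : Fin 2) b)
            (psCompMv q (X (1 : Fin 2))) = 0 :=
    fun habs => absurd (by rw [Finset.HasAntidiagonal.mem_antidiagonal]) habs
  rw [MvPowerSeries.coeff_mul, Finset.sum_eq_single _ h0' h1', coeff_E, coeff_E]
  simp

end Aux

/-- Rigidity on the two stably complex structures `ℂP²_{(1,-1)}` and `ℂP²_{(-1,1)}`:
if `f(0)=0`, `f'(0)=1` and, for some constant `c`,
`1/(f(u₁)f(u₂)) - 1/(f(u₁)f(u₁+u₂)) + 1/(f(-u₂)f(u₁+u₂)) = c` together with the same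
equation with `u₁` and `u₂` interchanged (both stated in cleared form), then
`1/f(u) + 1/f(-u)` is a constant `c'` (again in cleared form). -/
theorem stmt_3 {A : Type*} [CommRing A] [Algebra ℚ A] (f : PowerSeries A) (c : A)
    (h0 : PowerSeries.constantCoeff f = 0) (h1 : PowerSeries.coeff 1 f = 1)
    (hi : psCompMv f (X 0 + X 1) * psCompMv f (-X 1)
          - psCompMv f (X 1) * psCompMv f (-X 1)
          + psCompMv f (X 0) * psCompMv f (X 1)
        = MvPowerSeries.C (σ := Fin 2) c *
            (psCompMv f (X 0) * psCompMv f (X 1) * psCompMv f (X 0 + X 1) * psCompMv f (-X 1)))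
    (hii : psCompMv f (X 0 + X 1) * psCompMv f (-X 0)
          - psCompMv f (X 0) * psCompMv f (-X 0)
          + psCompMv f (X 1) * psCompMv f (X 0)
        = MvPowerSeries.C (σ := Fin 2) c *
            (psCompMv f (X 0) * psCompMv f (X 1) * psCompMv f (X 0 + X 1) * psCompMv f (-X 0))) :
    ∃ c' : A, PowerSeries.rescale (-1) f + f
        = PowerSeries.C c' * (f * PowerSeries.rescale (-1) f) := by
  classical
  set rf := PowerSeries.rescale (-1 : A) f with hrf
  set P := f * rf with hP
  set G := rf + f with hG
  rw [psCompMv_neg_X f 1, ← hrf] at hi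
  rw [psCompMv_neg_X f 0, ← hrf] at hii
  -- key identity
  have hK : psCompMv P (X (0 : Fin 2)) * psCompMv G (X 1)
      = psCompMv G (X (0 : Fin 2)) * psCompMv P (X 1) := by
    rw [hP, hG, psCompMv_mul_X, psCompMv_mul_X, psCompMv_add, psCompMv_add]
    linear_combination (psCompMv rf (X 0)) * hi - (psCompMv rf (X 1)) * hii
  have hPG : ∀ b : ℕ, PowerSeries.coeff 2 P * PowerSeries.coeff b G
      = PowerSeries.coeff 2 G * PowerSeries.coeff b P := by
    intro b
    have h2 := congrArg
      (MvPowerSeries.coeff (Finsupp.single (0 : Fin 2) 2 + Finsupp.single (1 : Fin 2) b)) hK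
    exact (coeff_mixed P G 2 b).symm.trans (h2.trans (coeff_mixed G P 2 b))
  have hP2 : PowerSeries.coeff 2 P = -1 := by
    rw [hP, PowerSeries.coeff_mul, Finset.Nat.sum_antidiagonal_eq_sum_range_succ_mk]
    rw [Finset.sum_range_succ, Finset.sum_range_succ, Finset.sum_range_succ,
      Finset.sum_range_zero]
    simp [hrf, PowerSeries.coeff_rescale, h1,
      show PowerSeries.coeff 0 f = 0 by rw [PowerSeries.coeff_zero_eq_constantCoeff, h0]]
  refine ⟨-(PowerSeries.coeff 2 G), ?_⟩
  apply PowerSeries.ext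
  intro n
  have h := hPG n
  rw [hP2] at h
  rw [PowerSeries.coeff_C_mul]
  linear_combination -h
end
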